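/- Let h be a nonnegative real random variable, α>2, and y>0. Then ∫_{ℝ²} ‖x‖^{−α}·E[h·1_{{h ≤ y‖x‖^α}}] dx = (2π/(α−2))·y^{1−2/α}·E[h^{2/α}], as an identity in [0,∞]. -/

import Mathlib

open MeasureTheory ProbabilityTheory Filter Real
open scoped ProbabilityTheory ENNReal

local notation "E2" => EuclideanSpace ℝ (Fin 2)

section AuxT1
open Set

lemma radial_lintegral (f : ℝ → ℝ≥0∞) (hf : Measurable f) :
    ∫⁻ x : E2, f ‖x‖ =
      2 * ENNReal.ofReal π * ∫⁻ r in Set.Ioi (0 : ℝ), ENNReal.ofReal r * f r := by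
  have hdim : Module.finrank ℝ E2 = 2 := by simp
  have mp := (Measure.measurePreserving_homeomorphUnitSphereProd (volume : Measure E2))
  have hmeas : Measurable fun p : (Metric.sphere (0:E2) 1 × Set.Ioi (0:ℝ)) => f p.2 :=
    hf.comp (measurable_subtype_coe.comp measurable_snd)
  have key := mp.lintegral_comp hmeas
  have lhs : ∫⁻ x : ({(0:E2)}ᶜ : Set E2),
      f ((homeomorphUnitSphereProd E2 x).2 : ℝ) ∂((volume : Measure E2).comap (↑))
      = ∫⁻ x : E2, f ‖x‖ := by
    simp only [homeomorphUnitSphereProd_apply_snd_coe]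
    rw [lintegral_subtype_comap (measurableSet_singleton (0:E2)).compl
      (fun x : E2 => f ‖x‖), MeasureTheory.restrict_compl_singleton]
  rw [lhs] at key
  have inner : (∫⁻ r : Set.Ioi (0:ℝ), f r ∂(Measure.volumeIoiPow (Module.finrank ℝ E2 - 1)))
        = ∫⁻ r in Set.Ioi (0:ℝ), ENNReal.ofReal r * f r := by
    rw [hdim]
    have hd : Measurable fun r : Set.Ioi (0:ℝ) => ENNReal.ofReal ((r : ℝ) ^ (2 - 1 : ℕ)) :=
      ((measurable_subtype_coe).pow_const _).ennreal_ofReal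
    have hfc : Measurable fun r : Set.Ioi (0:ℝ) => f r := hf.comp measurable_subtype_coe
    rw [Measure.volumeIoiPow, lintegral_withDensity_eq_lintegral_mul _ hd hfc]
    simp only [Pi.mul_apply]
    norm_num
    exact lintegral_subtype_comap measurableSet_Ioi (fun r => ENNReal.ofReal r * f r)
  rw [key, lintegral_prod _ hmeas.aemeasurable]
  simp only [inner]
  rw [lintegral_const, Measure.toSphere_apply_univ, hdim]
  rw [EuclideanSpace.volume_ball]
  have hb : (Real.sqrt π) ^ Fintype.card (Fin 2) / Real.Gamma (Fintype.card (Fin 2) / 2 + 1) = π := by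
    rw [Fintype.card_fin]
    norm_num [Real.sq_sqrt Real.pi_nonneg, Real.Gamma_two]
  rw [hb]
  simp only [Fintype.card_fin, ENNReal.ofReal_one, one_pow, one_mul, Nat.cast_ofNat]
  ring

lemma per_omega (α y c : ℝ) (hα : 2 < α) (hy : 0 < y) (hc : 0 ≤ c) :
    ∫⁻ x : E2, ENNReal.ofReal (‖x‖ ^ (-α)) *
        (if c ≤ y * ‖x‖ ^ α then ENNReal.ofReal c else 0)
      = ENNReal.ofReal (2 * π / (α - 2) * y ^ (1 - 2 / α)) *
          ENNReal.ofReal (c ^ (2 / α)) := by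
  have hα0 : (0:ℝ) < α := by linarith
  have hrpow : ∀ e : ℝ, Measurable fun r : ℝ => r ^ e := fun e =>
    measurable_of_continuousOn_compl_singleton 0 fun x hx =>
      (Real.continuousAt_rpow_const x e (Or.inl hx)).continuousWithinAt
  have hf : Measurable fun r : ℝ => ENNReal.ofReal (r ^ (-α)) *
      (if c ≤ y * r ^ α then ENNReal.ofReal c else 0) := by
    apply Measurable.mul
    · exact (hrpow (-α)).ennreal_ofReal
    · refine Measurable.ite ?_ measurable_const measurable_const
      exact measurableSet_le measurable_const ((hrpow α).const_mul y)
  rw [radial_lintegral _ hf]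
  rcases eq_or_lt_of_le hc with rfl | hc'
  · have h2α : (2:ℝ) / α ≠ 0 := by positivity
    simp only [ENNReal.ofReal_zero, ite_self, mul_zero, lintegral_zero, Real.zero_rpow h2α]
  · set t : ℝ := (c / y) ^ (α⁻¹) with ht
    have hcy : 0 < c / y := div_pos hc' hy
    have ht0 : 0 < t := Real.rpow_pos_of_pos hcy _
    have hα2 : (0:ℝ) < α - 2 := by linarith
    have hcong : ∀ r ∈ Ioi (0:ℝ),
        ENNReal.ofReal r * (ENNReal.ofReal (r ^ (-α)) *
          (if c ≤ y * r ^ α then ENNReal.ofReal c else 0))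
        = (Ici t).indicator
            (fun r => ENNReal.ofReal c * ENNReal.ofReal (r ^ (1 - α))) r := by
      intro r hr
      rw [mem_Ioi] at hr
      have hiff : (c ≤ y * r ^ α) ↔ t ≤ r := by
        rw [ht, Real.rpow_inv_le_iff_of_pos hcy.le hr.le hα0, div_le_iff₀ hy, mul_comm]
      have hval : ENNReal.ofReal r * ENNReal.ofReal (r ^ (-α))
          = ENNReal.ofReal (r ^ (1 - α)) := by
        rw [← ENNReal.ofReal_mul hr.le]
        congr 1
        rw [show (1 - α) = 1 + (-α) by ring, Real.rpow_add hr, Real.rpow_one]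
      rw [Set.indicator_apply]
      by_cases hcase : t ≤ r
      · rw [if_pos (hiff.mpr hcase), if_pos (mem_Ici.mpr hcase), ← mul_assoc, hval, mul_comm]
      · rw [if_neg (fun hh => hcase (hiff.mp hh)), if_neg (fun hh => hcase (mem_Ici.mp hh))]
        simp
    rw [setLIntegral_congr_fun measurableSet_Ioi hcong]
    have hIci : Ici t ∩ Ioi (0:ℝ) = Ici t :=
      Set.inter_eq_self_of_subset_left fun r hr => ht0.trans_le hr
    rw [lintegral_indicator measurableSet_Ici, Measure.restrict_restrict measurableSet_Ici,
      hIci, Measure.restrict_congr_set Ioi_ae_eq_Ici.symm]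
    rw [lintegral_const_mul _ ((hrpow (1-α)).ennreal_ofReal)]
    have hint : ∫⁻ r in Ioi t, ENNReal.ofReal (r ^ (1 - α))
        = ENNReal.ofReal (t ^ (2 - α) / (α - 2)) := by
      rw [← ofReal_integral_eq_lintegral_ofReal
        (integrableOn_Ioi_rpow_of_lt (by linarith) ht0)
        (by filter_upwards [ae_restrict_mem measurableSet_Ioi] with r hr using
          Real.rpow_nonneg (le_of_lt (ht0.trans hr)) _)]
      rw [integral_Ioi_rpow_of_lt (by linarith) ht0]
      congr 1
      rw [show (1 - α + 1) = 2 - α by ring, show (2 - α) = -(α - 2) by ring,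
        neg_div_neg_eq]
    rw [hint]
    have hct : c * t ^ (2 - α) = c ^ (2 / α) * y ^ (1 - 2 / α) := by
      have e1 : t ^ (2 - α) = (c / y) ^ (2 / α - 1) := by
        rw [ht, ← Real.rpow_mul hcy.le]
        congr 1
        field_simp
      have e2 : (c / y) ^ (2 / α - 1) = c ^ (2 / α - 1) * y ^ (1 - 2 / α) := by
        rw [Real.div_rpow hc hy.le, div_eq_mul_inv, ← Real.rpow_neg hy.le]
        congr 2
        ring
      have e3 : c * c ^ (2 / α - 1) = c ^ (2 / α) :=
        calc c * c ^ (2 / α - 1) = c ^ (1:ℝ) * c ^ (2 / α - 1) := by rw [Real.rpow_one]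
          _ = c ^ (1 + (2 / α - 1)) := (Real.rpow_add hc' _ _).symm
          _ = c ^ (2 / α) := by ring_nf
      rw [e1, e2, ← mul_assoc, e3]
    have hd : (0:ℝ) ≤ t ^ (2 - α) / (α - 2) :=
      div_nonneg (Real.rpow_nonneg ht0.le _) hα2.le
    rw [show (2 : ℝ≥0∞) = ENNReal.ofReal 2 from by norm_num,
      ← ENNReal.ofReal_mul (by norm_num : (0:ℝ) ≤ 2),
      ← ENNReal.ofReal_mul hc,
      ← ENNReal.ofReal_mul (by positivity : (0:ℝ) ≤ 2 * π),
      ← ENNReal.ofReal_mul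
        (mul_nonneg (div_nonneg (by positivity) hα2.le) (Real.rpow_nonneg hy.le _))]
    congr 1
    rw [show c * (t ^ (2 - α) / (α - 2)) = (c * t ^ (2 - α)) / (α - 2) by ring, hct]
    field_simp

end AuxT1

/-- Exact evaluation of the term `T₁` in the interference tail bound: for a
nonnegative random variable `h`, `α > 2` and `y > 0`,
`∫_{ℝ²} ‖x‖^{-α}·E[h·1_{h ≤ y‖x‖^α}] dx = (2π/(α-2))·y^(1-2/α)·E[h^(2/α)]`,
as an identity in `[0,∞]`. -/
theorem stmt_17
    {Ω : Type*} [MeasureSpace Ω] [IsProbabilityMeasure (ℙ : Measure Ω)]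
    (h : Ω → ℝ) (hh_meas : Measurable h) (hh_nonneg : ∀ ω, 0 ≤ h ω)
    (α y : ℝ) (hα : 2 < α) (hy : 0 < y) :
    ∫⁻ x : E2, ENNReal.ofReal (‖x‖ ^ (-α)) *
        ∫⁻ ω in {ω | h ω ≤ y * ‖x‖ ^ α}, ENNReal.ofReal (h ω) =
      ENNReal.ofReal (2 * π / (α - 2) * y ^ (1 - 2 / α)) *
        ∫⁻ ω, ENNReal.ofReal (h ω ^ (2 / α)) := by
  have hrpow : ∀ e : ℝ, Measurable fun r : ℝ => r ^ e := fun e =>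
    measurable_of_continuousOn_compl_singleton 0 fun x hx =>
      (Real.continuousAt_rpow_const x e (Or.inl hx)).continuousWithinAt
  have hSmeas : ∀ x : E2, MeasurableSet {ω | h ω ≤ y * ‖x‖ ^ α} := fun x =>
    measurableSet_le hh_meas measurable_const
  have step1 : ∀ x : E2, (ENNReal.ofReal (‖x‖ ^ (-α)) *
      ∫⁻ ω in {ω | h ω ≤ y * ‖x‖ ^ α}, ENNReal.ofReal (h ω))
      = ∫⁻ ω, ENNReal.ofReal (‖x‖ ^ (-α)) *
          (if h ω ≤ y * ‖x‖ ^ α then ENNReal.ofReal (h ω) else 0) := by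
    intro x
    rw [← lintegral_indicator (hSmeas x),
      ← lintegral_const_mul _ ((hh_meas.ennreal_ofReal).indicator (hSmeas x))]
    refine lintegral_congr fun ω => ?_
    rw [Set.indicator_apply]
    simp only [Set.mem_setOf_eq]
  have hG : Measurable (Function.uncurry fun (x : E2) (ω : Ω) =>
      ENNReal.ofReal (‖x‖ ^ (-α)) *
        (if h ω ≤ y * ‖x‖ ^ α then ENNReal.ofReal (h ω) else 0)) := by
    apply Measurable.mul
    · exact ((hrpow (-α)).comp measurable_fst.norm).ennreal_ofReal
    · refine Measurable.ite ?_ (hh_meas.comp measurable_snd).ennreal_ofReal measurable_const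
      exact measurableSet_le (hh_meas.comp measurable_snd)
        (((hrpow α).comp measurable_fst.norm).const_mul y)
  rw [lintegral_congr step1, lintegral_lintegral_swap hG.aemeasurable]
  have step3 : ∀ ω, (∫⁻ x : E2, ENNReal.ofReal (‖x‖ ^ (-α)) *
      (if h ω ≤ y * ‖x‖ ^ α then ENNReal.ofReal (h ω) else 0))
      = ENNReal.ofReal (2 * π / (α - 2) * y ^ (1 - 2 / α)) *
          ENNReal.ofReal (h ω ^ (2 / α)) := fun ω =>
    per_omega α y (h ω) hα hy (hh_nonneg ω)
  rw [lintegral_congr step3]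
  exact lintegral_const_mul _
    (show Measurable fun ω => ENNReal.ofReal (h ω ^ (2 / α)) from
      (((hrpow (2 / α)).comp hh_meas).ennreal_ofReal))
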